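/- The function w(x) = x·ln(x/sin x), extended by w(0)=0, is strictly superadditive on (0, π): for all 0 < x < y < π, w(x) + w(y - x) < w(y). -/

import Mathlib

open Real

/-- The function `w(x) = x · ln(x / sin x)` (extended by `w 0 = 0`). -/
noncomputable def w (x : ℝ) : ℝ := x * Real.log (x / Real.sin x)

open Set Filter Topology

/-- first derivative of `w` -/
noncomputable def wd (x : ℝ) : ℝ :=
  Real.log x - Real.log (Real.sin x) + (1 - x * (Real.cos x / Real.sin x))

lemma hasDerivAt_w {x : ℝ} (hx : 0 < x) (hx' : x < π) : HasDerivAt w (wd x) x := by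
  have hs : 0 < Real.sin x := Real.sin_pos_of_pos_of_lt_pi hx hx'
  have h1 : HasDerivAt (fun t => Real.log t - Real.log (Real.sin t))
      (x⁻¹ - Real.cos x / Real.sin x) x :=
    (Real.hasDerivAt_log hx.ne').sub ((Real.hasDerivAt_sin x).log hs.ne')
  have h2 : HasDerivAt (fun t => t * (Real.log t - Real.log (Real.sin t)))
      (1 * (Real.log x - Real.log (Real.sin x)) + x * (x⁻¹ - Real.cos x / Real.sin x)) x :=
    (hasDerivAt_id x).mul h1
  have heq : w =ᶠ[𝓝 x] fun t => t * (Real.log t - Real.log (Real.sin t)) := by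
    filter_upwards [isOpen_Ioo.eventually_mem (show x ∈ Ioo 0 π from ⟨hx, hx'⟩)] with t ht
    have hst : 0 < Real.sin t := Real.sin_pos_of_pos_of_lt_pi ht.1 ht.2
    rw [w, Real.log_div (ne_of_gt ht.1) (ne_of_gt hst)]
  have := h2.congr_of_eventuallyEq heq
  refine this.congr_deriv ?_
  rw [wd]
  field_simp

/-- second derivative of `w` -/
noncomputable def wdd (x : ℝ) : ℝ :=
  1 / x - 2 * (Real.cos x / Real.sin x) + x / (Real.sin x) ^ 2

lemma hasDerivAt_wd {x : ℝ} (hx : 0 < x) (hx' : x < π) : HasDerivAt wd (wdd x) x := by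
  have hs : 0 < Real.sin x := Real.sin_pos_of_pos_of_lt_pi hx hx'
  have h1 : HasDerivAt (fun t => Real.log t - Real.log (Real.sin t))
      (x⁻¹ - Real.cos x / Real.sin x) x :=
    (Real.hasDerivAt_log hx.ne').sub ((Real.hasDerivAt_sin x).log hs.ne')
  have h2 : HasDerivAt (fun t => Real.cos t / Real.sin t)
      ((-Real.sin x * Real.sin x - Real.cos x * Real.cos x) / (Real.sin x) ^ 2) x :=
    (Real.hasDerivAt_cos x).div (Real.hasDerivAt_sin x) hs.ne'
  have h3 : HasDerivAt (fun t => t * (Real.cos t / Real.sin t))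
      (1 * (Real.cos x / Real.sin x) +
        x * ((-Real.sin x * Real.sin x - Real.cos x * Real.cos x) / (Real.sin x) ^ 2)) x :=
    (hasDerivAt_id x).mul h2
  have h4 := h1.add ((hasDerivAt_const x (1 : ℝ)).sub h3)
  have hpy : Real.sin x ^ 2 + Real.cos x ^ 2 = 1 := Real.sin_sq_add_cos_sq x
  have hm1 : -Real.sin x * Real.sin x - Real.cos x * Real.cos x = -1 := by nlinarith [hpy]
  rw [hm1] at h4
  refine HasDerivAt.congr_deriv (f := wd) h4 ?_
  rw [wdd]
  field_simp
  ring

lemma wdd_pos {x : ℝ} (hx : 0 < x) (hx' : x < π) : 0 < wdd x := by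
  have hs : 0 < Real.sin x := Real.sin_pos_of_pos_of_lt_pi hx hx'
  have hpy : Real.sin x ^ 2 + Real.cos x ^ 2 = 1 := Real.sin_sq_add_cos_sq x
  have key : x * Real.sin x ^ 2 * wdd x =
      Real.sin x ^ 2 - 2 * x * Real.sin x * Real.cos x + x ^ 2 := by
    rw [wdd]
    field_simp
  have h5 : 0 < x * Real.sin x ^ 2 * wdd x := by
    nlinarith [key, sq_nonneg (x - Real.sin x * Real.cos x), pow_pos hs 4, hpy]
  by_contra h
  push_neg at h
  nlinarith [h5, mul_nonpos_of_nonneg_of_nonpos (le_of_lt (mul_pos hx (pow_pos hs 2))) h]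

lemma tendsto_w_zero : Tendsto w (𝓝[>] (0 : ℝ)) (𝓝 0) := by
  have t0 : Tendsto (fun t => Real.sin t / t) (𝓝[>] (0 : ℝ)) (𝓝 1) := by
    have h := Real.hasDerivAt_sin 0
    rw [hasDerivAt_iff_tendsto_slope] at h
    have h' : Tendsto (slope Real.sin 0) (𝓝[>] (0 : ℝ)) (𝓝 (Real.cos 0)) :=
      h.mono_left (nhdsWithin_mono _ (fun z hz => ne_of_gt hz))
    rw [Real.cos_zero] at h'
    refine h'.congr' ?_
    filter_upwards with t
    simp [slope_def_field]
  have tlog : Tendsto (fun t => Real.log (Real.sin t / t)) (𝓝[>] (0 : ℝ)) (𝓝 0) := by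
    have := (Real.continuousAt_log (by norm_num : (1 : ℝ) ≠ 0)).tendsto.comp t0
    simpa [Function.comp_def] using this
  have tx : Tendsto (fun t : ℝ => t) (𝓝[>] (0 : ℝ)) (𝓝 0) :=
    tendsto_id.mono_left nhdsWithin_le_nhds
  have tprod : Tendsto (fun t : ℝ => -(t * Real.log (Real.sin t / t)))
      (𝓝[>] (0 : ℝ)) (𝓝 0) := by
    have := (tx.mul tlog).neg
    simpa using this
  refine tprod.congr' ?_
  filter_upwards [Ioo_mem_nhdsGT_of_mem (show (0:ℝ) ∈ Ico (0:ℝ) π from ⟨le_refl 0, Real.pi_pos⟩)]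
    with t ht
  have hst : 0 < Real.sin t := Real.sin_pos_of_pos_of_lt_pi ht.1 ht.2
  rw [w, Real.log_div (ne_of_gt ht.1) (ne_of_gt hst),
    Real.log_div (ne_of_gt hst) (ne_of_gt ht.1)]
  ring

lemma w_zero : w 0 = 0 := by simp [w]

lemma continuousOn_w {y : ℝ} (hy : y < π) : ContinuousOn w (Icc 0 y) := by
  intro t ht
  rcases eq_or_lt_of_le ht.1 with h0 | h0
  · subst h0
    have hIoi : ContinuousWithinAt w (Ioi (0:ℝ)) 0 := by
      rw [ContinuousWithinAt, w_zero]
      exact tendsto_w_zero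
    exact (continuousWithinAt_Ioi_iff_Ici.mp hIoi).mono Icc_subset_Ici_self
  · have hst : 0 < Real.sin t := Real.sin_pos_of_pos_of_lt_pi h0 (lt_of_le_of_lt ht.2 hy)
    have hne : t / Real.sin t ≠ 0 := by positivity
    have hdiv : ContinuousAt (fun u : ℝ => u / Real.sin u) t :=
      ContinuousAt.div continuousAt_id Real.continuous_sin.continuousAt hst.ne'
    have hlog := ContinuousAt.comp (g := Real.log) (f := fun u : ℝ => u / Real.sin u)
      (x := t) (Real.continuousAt_log hne) hdiv
    have hlog' : ContinuousAt (fun u : ℝ => Real.log (u / Real.sin u)) t := hlog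
    have hw : ContinuousAt w t := continuousAt_id.mul hlog'
    exact hw.continuousWithinAt

lemma strictConvexOn_w {y : ℝ} (hy : y < π) : StrictConvexOn ℝ (Icc 0 y) w := by
  refine strictConvexOn_of_deriv2_pos (convex_Icc 0 y) (continuousOn_w hy) ?_
  intro t ht
  rw [interior_Icc] at ht
  have ht' : t < π := lt_trans ht.2 hy
  have hderiv1 : deriv w =ᶠ[𝓝 t] wd := by
    filter_upwards [isOpen_Ioo.eventually_mem (show t ∈ Ioo 0 π from ⟨ht.1, ht'⟩)] with z hz
    exact (hasDerivAt_w hz.1 hz.2).deriv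
  have h2 : deriv (deriv w) t = wdd t := by
    rw [Filter.EventuallyEq.deriv_eq hderiv1]
    exact (hasDerivAt_wd ht.1 ht').deriv
  have : (deriv^[2] w) t = deriv (deriv w) t := by
    simp [Function.iterate_succ, Function.iterate_zero, Function.comp]
  rw [this, h2]
  exact wdd_pos ht.1 ht'

theorem stmt_2 (x y : ℝ) (hx : 0 < x) (hxy : x < y) (hy : y < Real.pi) :
    w x + w (y - x) < w y := by
  have hy0 : 0 < y := lt_trans hx hxy
  have hconv := strictConvexOn_w hy
  have h0mem : (0:ℝ) ∈ Icc (0:ℝ) y := ⟨le_refl 0, le_of_lt hy0⟩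
  have hymem : y ∈ Icc (0:ℝ) y := ⟨le_of_lt hy0, le_refl y⟩
  have hne : (0:ℝ) ≠ y := ne_of_lt hy0
  -- w x < (x/y) * w y
  have h1 : w x < (x / y) * w y := by
    have ha : 0 < 1 - x / y := by
      have : x / y < 1 := (div_lt_one hy0).mpr hxy
      linarith
    have hb : 0 < x / y := div_pos hx hy0
    have hab : (1 - x / y) + x / y = 1 := by ring
    have := hconv.2 h0mem hymem hne ha hb hab
    have hxeq : (1 - x / y) • (0:ℝ) + (x / y) • y = x := by
      simp only [smul_eq_mul]
      field_simp
      ring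
    rw [hxeq] at this
    simpa [w_zero] using this
  have h2 : w (y - x) < ((y - x) / y) * w y := by
    have hb : 0 < (y - x) / y := div_pos (by linarith) hy0
    have ha : 0 < 1 - (y - x) / y := by
      have : (y - x) / y < 1 := (div_lt_one hy0).mpr (by linarith)
      linarith
    have hab : (1 - (y - x) / y) + (y - x) / y = 1 := by ring
    have := hconv.2 h0mem hymem hne ha hb hab
    have hxeq : (1 - (y - x) / y) • (0:ℝ) + ((y - x) / y) • y = y - x := by
      simp only [smul_eq_mul]
      field_simp
      ring
    rw [hxeq] at this
    simpa [w_zero] using this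
  have hsum : (x / y) * w y + ((y - x) / y) * w y = w y := by
    field_simp
    ring
  linarith
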